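/- Let p be a prime number, let V be a nonzero finite-dimensional vector space over ℚ, and let f be a linear endomorphism of V with f ∘ f = p·id_V. Then dim V is even and the characteristic polynomial of f equals (X² − p)^(dim V / 2). -/

import Mathlib

open Polynomial Matrix

lemma eval_charpoly_det {K : Type*} [Field K] {m : Type*} [Fintype m] [DecidableEq m]
    (M : Matrix m m K) (t : K) :
    M.charpoly.eval t = (t • (1 : Matrix m m K) - M).det := by
  rw [Matrix.charpoly, Polynomial.eval, ← Polynomial.coe_eval₂RingHom, RingHom.map_det]
  congr 1
  ext i j
  by_cases h : i = j <;>
    simp [Matrix.charmatrix_apply, h, Matrix.one_apply, Matrix.diagonal_apply]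


/-- If `f` is an endomorphism of a nonzero finite-dimensional `ℚ`-vector space `V`
with `f ∘ f = p · id`, then `dim V` is even and the characteristic polynomial of `f`
is `(X² − p)^(dim V / 2)`. -/
theorem stmt_3 (p : ℕ) (hp : p.Prime)
    (V : Type*) [AddCommGroup V] [Module ℚ V] [FiniteDimensional ℚ V]
    (hV : Nontrivial V) (f : V →ₗ[ℚ] V)
    (hf : f ∘ₗ f = (p : ℚ) • LinearMap.id) :
    Even (Module.finrank ℚ V) ∧
      LinearMap.charpoly f =
        (Polynomial.X ^ 2 - Polynomial.C (p : ℚ)) ^ (Module.finrank ℚ V / 2) := by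
  classical
  set n := Module.finrank ℚ V with hn
  set b := Module.finBasis ℚ V with hb
  set M := LinearMap.toMatrix b b f with hM
  have hchar : f.charpoly = M.charpoly := (LinearMap.charpoly_toMatrix f b).symm
  have hM2 : M * M = (p : ℚ) • 1 := by
    rw [hM, ← LinearMap.toMatrix_comp b b b, hf]
    simp [LinearMap.toMatrix_id]
  set φ : ℚ →+* ℂ := algebraMap ℚ ℂ with hφ
  set N := M.map φ with hNdef
  have hNchar : N.charpoly = M.charpoly.map φ := Matrix.charpoly_map M φ
  have hN2 : N * N = (p : ℂ) • 1 := by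
    rw [hNdef, ← Matrix.map_mul, hM2]
    ext i j
    by_cases h : i = j <;> simp [Matrix.one_apply, h]
  set s : ℂ := ((Real.sqrt p : ℝ) : ℂ) with hs
  have hs2 : s ^ 2 = (p : ℂ) := by
    rw [hs]; norm_cast
    rw [Real.sq_sqrt (by positivity)]
  have hsR : (0 : ℝ) < Real.sqrt p := Real.sqrt_pos.mpr (by exact_mod_cast hp.pos)
  have hs0 : s ≠ 0 := by
    rw [hs]
    exact_mod_cast hsR.ne'
  have hsne : s ≠ -s := by
    intro h
    apply hs0
    have h2 : (2 : ℂ) * s = 0 := by linear_combination h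
    exact (mul_eq_zero.mp h2).resolve_left two_ne_zero
  -- every root of N.charpoly squares to p
  have hroot : ∀ z ∈ N.charpoly.roots, z = s ∨ z = -s := by
    intro z hz
    have hz' := Polynomial.isRoot_of_mem_roots hz
    rw [Polynomial.IsRoot, eval_charpoly_det] at hz'
    obtain ⟨v, hv0, hv⟩ := Matrix.exists_mulVec_eq_zero_iff.mpr hz'
    rw [Matrix.sub_mulVec, Matrix.smul_mulVec, Matrix.one_mulVec] at hv
    have hEig : N.mulVec v = z • v := (sub_eq_zero.mp hv).symm
    have h3 : N.mulVec (N.mulVec v) = z ^ 2 • v := by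
      rw [hEig, Matrix.mulVec_smul, hEig, smul_smul, ← pow_two]
    have h4 : N.mulVec (N.mulVec v) = (p : ℂ) • v := by
      rw [Matrix.mulVec_mulVec, hN2, Matrix.smul_mulVec, Matrix.one_mulVec]
    obtain ⟨i, hi⟩ := Function.ne_iff.mp hv0
    have hi' : v i ≠ 0 := by simpa using hi
    have hzp : z ^ 2 = (p : ℂ) := by
      have h5 : z ^ 2 * v i = (p : ℂ) * v i := by
        have := congrFun (h3.symm.trans h4) i
        simpa using this
      exact mul_right_cancel₀ hi' h5
    have hfac : (z - s) * (z + s) = 0 := by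
      have h6 : z ^ 2 - s ^ 2 = 0 := by rw [hzp, hs2]; ring
      linear_combination h6
    rcases mul_eq_zero.mp hfac with h | h
    · left; linear_combination h
    · right; linear_combination h
  have hsplits : N.charpoly.Splits := IsAlgClosed.splits N.charpoly
  set R := N.charpoly.roots with hRdef
  set a := R.count s with ha
  set c := R.count (-s) with hc
  have hsne' : -s ≠ s := fun h => hsne h.symm
  have hRdecomp : R = Multiset.replicate a s + Multiset.replicate c (-s) := by
    ext z
    rw [Multiset.count_add, Multiset.count_replicate, Multiset.count_replicate]
    by_cases h1 : z = s
    · subst h1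
      simp [hsne, hsne', ha]
    · by_cases h2 : z = -s
      · subst h2
        simp [hsne, hsne', hc]
      · have hzR : z ∉ R := fun hzz => by rcases hroot z hzz with h | h <;> tauto
        simp [Multiset.count_eq_zero.mpr hzR, h1, h2, Ne.symm h1, Ne.symm h2]
  have hdeg : f.charpoly.natDegree = n := by
    rw [hn]; exact f.charpoly_natDegree
  have hNdeg : N.charpoly.natDegree = n := by
    rw [hNchar, Polynomial.natDegree_map, ← hchar, hdeg]
  have hcard : a + c = n := by
    have hcr := Polynomial.splits_iff_card_roots.mp hsplits
    calc a + c = Multiset.card R := by rw [hRdecomp]; simp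
    _ = n := by rw [hRdef] at *; rw [hcr, hNdeg]
  have htr : ((M.trace : ℂ)) = ((a : ℂ) - c) * s := by
    have h1 : N.trace = R.sum := Matrix.trace_eq_sum_roots_charpoly N
    have h2 : N.trace = φ M.trace := by
      simp [Matrix.trace, hNdef, Matrix.diag, map_sum]
    rw [hRdecomp, Multiset.sum_add, Multiset.sum_replicate, Multiset.sum_replicate, h2,
      eq_ratCast φ M.trace] at h1
    rw [h1]
    push_cast [nsmul_eq_mul]
    ring
  have hab : a = c := by
    by_contra hne
    have hreal : ((M.trace : ℝ)) = ((a : ℝ) - c) * Real.sqrt p := by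
      have h3 := htr
      rw [hs] at h3
      have := congrArg Complex.re h3
      push_cast at this
      simpa using this
    have hne' : ((a : ℝ) - c) ≠ 0 := by
      intro h
      exact hne (by exact_mod_cast sub_eq_zero.mp h)
    have hsq : Real.sqrt p = ((M.trace / ((a : ℚ) - c) : ℚ) : ℝ) := by
      push_cast
      field_simp
      linarith [hreal]
    exact hp.irrational_sqrt ⟨_, hsq.symm⟩
  have hn2 : n = 2 * a := by omega
  have hprod : N.charpoly = ((Polynomial.X : ℂ[X]) ^ 2 - Polynomial.C ((p : ℂ))) ^ a := by
    have heq := hsplits.eq_prod_roots_of_monic N.charpoly_monic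
    rw [← hRdef, hRdecomp, ← hab] at heq
    rw [heq]
    simp only [Multiset.map_add, Multiset.map_replicate, Multiset.prod_add,
      Multiset.prod_replicate, map_neg, sub_neg_eq_add]
    rw [← mul_pow]
    congr 1
    rw [← hs2, map_pow]
    ring
  have hmapeq : (f.charpoly).map φ =
      (((Polynomial.X : ℚ[X]) ^ 2 - Polynomial.C ((p : ℚ))) ^ a).map φ := by
    rw [Polynomial.map_pow, Polynomial.map_sub, Polynomial.map_pow, Polynomial.map_X,
      Polynomial.map_C, hchar, ← hNchar, hprod]
    norm_num
  have hfin := Polynomial.map_injective φ φ.injective hmapeq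
  refine ⟨⟨a, by omega⟩, ?_⟩
  rw [hfin, hn2]
  congr 1
  omega
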